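/- If an allocation σ is Pareto optimal, then there exists an ordering i_1, i_2, …, i_n of the agents such that for each j, agent i_j is assigned under σ their most-preferred room among the rooms not assigned to agents i_1, …, i_{j−1}. (Every Pareto-optimal allocation is realizable as a serial-dictatorship outcome for some order of the agents.) -/

import Mathlib

/-- Allocation `σ'` Pareto dominates allocation `σ`: every agent weakly prefers
`σ' i` to `σ i` (equal or strictly preferred), and some agent strictly prefers it. -/
def ParetoDominates {A R : Type*} (pref : A → R → R → Prop) (σ' σ : A ≃ R) : Prop :=
  (∀ i, σ' i = σ i ∨ pref i (σ' i) (σ i)) ∧ ∃ i, pref i (σ' i) (σ i)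

/-- An allocation is Pareto optimal if no allocation Pareto dominates it. -/
def ParetoOptimal {A R : Type*} (pref : A → R → R → Prop) (σ : A ≃ R) : Prop :=
  ∀ σ' : A ≃ R, ¬ ParetoDominates pref σ' σ

open Function in
lemma exists_top_agent {n : ℕ} (pref : Fin n → Fin n → Fin n → Prop)
    (hpref : ∀ i, IsStrictTotalOrder (Fin n) (pref i))
    (σ : Fin n ≃ Fin n) (hσ : ParetoOptimal pref σ)
    (S : Finset (Fin n)) (hS : S.Nonempty) :
    ∃ i ∈ S, ∀ j ∈ S, j ≠ i → pref i (σ i) (σ j) := by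
  classical
  by_contra h
  push_neg at h
  have hg : ∀ i ∈ S, ∃ j ∈ S, pref i (σ j) (σ i) := by
    intro i hi
    obtain ⟨j, hj, hne, hnp⟩ := h i hi
    refine ⟨j, hj, ?_⟩
    rcases (show pref i (σ i) (σ j) ∨ σ i = σ j ∨ pref i (σ j) (σ i) by
      have := (hpref i).trichotomous (σ i) (σ j); tauto) with h1 | h1 | h1
    · exact absurd h1 hnp
    · exact absurd (σ.injective h1).symm hne
    · exact h1
  choose g hgS hgp using hg
  set G : Fin n → Fin n := fun i => if hi : i ∈ S then g i hi else i with hG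
  have hGS : ∀ i ∈ S, G i ∈ S := by
    intro i hi; simp only [hG, dif_pos hi]; exact hgS i hi
  have hGp : ∀ i ∈ S, pref i (σ (G i)) (σ i) := by
    intro i hi; simp only [hG, dif_pos hi]; exact hgp i hi
  obtain ⟨i₀, hi₀⟩ := hS
  have hiterS : ∀ t, G^[t] i₀ ∈ S := by
    intro t
    induction t with
    | zero => simpa using hi₀
    | succ t ih => rw [Function.iterate_succ_apply']; exact hGS _ ih
  -- pigeonhole: some iterate repeats
  have hpigeon : ∃ a ∈ Finset.range (n + 1), ∃ b ∈ Finset.range (n + 1),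
      a ≠ b ∧ G^[a] i₀ = G^[b] i₀ := by
    apply Finset.exists_ne_map_eq_of_card_lt_of_maps_to (t := S)
    · have := S.card_le_univ
      simp only [Finset.card_range, Finset.card_univ, Fintype.card_fin] at *
      omega
    · intro a _; exact hiterS a
  obtain ⟨a, _, b, _, hab, heq⟩ := hpigeon
  -- wlog a < b
  have hcyc : ∃ k, 0 < k ∧ G^[k] (G^[min a b] i₀) = G^[min a b] i₀ := by
    rcases lt_or_gt_of_ne hab with hlt | hlt
    · refine ⟨b - a, by omega, ?_⟩
      rw [min_eq_left hlt.le, ← Function.iterate_add_apply]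
      rw [show b - a + a = b by omega]; exact heq.symm
    · refine ⟨a - b, by omega, ?_⟩
      rw [min_eq_right hlt.le, ← Function.iterate_add_apply]
      rw [show a - b + b = a by omega]; exact heq
  set i : Fin n := G^[min a b] i₀ with hi
  have hiS : i ∈ S := hiterS _
  have hiter2 : ∀ t, G^[t] i ∈ S := by
    intro t; rw [hi, ← Function.iterate_add_apply]; exact hiterS _
  set m : ℕ := Nat.find hcyc with hm
  obtain ⟨hmpos, hmfix⟩ : 0 < m ∧ G^[m] i = i := Nat.find_spec hcyc
  have hmin : ∀ k, 0 < k → k < m → G^[k] i ≠ i := by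
    intro k hk hkm hne
    exact Nat.find_min hcyc hkm ⟨hk, hne⟩
  set L : List (Fin n) := (List.range m).map (fun t => G^[t] i) with hL
  have hLlen : L.length = m := by simp [hL]
  have key : ∀ x y : ℕ, x < y → y < m → G^[x] i ≠ G^[y] i := by
    intro x y hlt hy hxy
    apply hmin (m - y + x) (by omega) (by omega)
    rw [Function.iterate_add_apply, hxy, ← Function.iterate_add_apply,
      show m - y + y = m by omega, hmfix]
  have hLnodup : L.Nodup := by
    rw [hL, List.nodup_map_iff_inj_on List.nodup_range]
    intro x hx y hy hxy
    simp only [List.mem_range] at hx hy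
    rcases Nat.lt_trichotomy x y with hlt | he | hlt
    · exact absurd hxy (key x y hlt hy)
    · exact he
    · exact absurd hxy.symm (key y x hlt hx)
  have hmemL : ∀ t, t < m → G^[t] i ∈ L := by
    intro t ht; rw [hL]; exact List.mem_map_of_mem (List.mem_range.mpr ht)
  have hformG : ∀ x ∈ L, L.formPerm x = G x := by
    intro x hx
    rw [hL] at hx
    obtain ⟨t, ht, rfl⟩ := List.mem_map.mp hx
    rw [List.mem_range] at ht
    have ht' : t < L.length := by omega
    have hxt : L[t]'ht' = G^[t] i := by simp [hL]
    rw [← hxt, List.formPerm_apply_getElem L hLnodup t ht']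
    simp only [hL, List.getElem_map, List.getElem_range, List.length_map, List.length_range]
    rcases Nat.lt_or_ge (t + 1) m with h3 | h3
    · rw [Nat.mod_eq_of_lt h3, Function.iterate_succ_apply']
    · have h4 : t + 1 = m := by omega
      rw [h4, Nat.mod_self, Function.iterate_zero_apply]
      conv_lhs => rw [← hmfix, ← h4, Function.iterate_succ_apply']
  have hLS : ∀ x ∈ L, x ∈ S := by
    intro x hx
    rw [hL] at hx
    obtain ⟨t, _, rfl⟩ := List.mem_map.mp hx
    exact hiter2 t
  -- the dominating allocation
  refine hσ ((L.formPerm).trans σ) ⟨?_, ?_⟩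
  · intro x
    by_cases hx : x ∈ L
    · right
      simp only [Equiv.trans_apply]
      rw [hformG x hx]
      exact hGp x (hLS x hx)
    · left
      simp only [Equiv.trans_apply]
      rw [List.formPerm_apply_of_notMem hx]
  · refine ⟨i, ?_⟩
    have hiL : i ∈ L := by simpa using hmemL 0 hmpos
    simp only [Equiv.trans_apply]
    rw [hformG i hiL]
    exact hGp i hiS

lemma build_list {n : ℕ} (pref : Fin n → Fin n → Fin n → Prop)
    (hpref : ∀ i, IsStrictTotalOrder (Fin n) (pref i))
    (σ : Fin n ≃ Fin n) (hσ : ParetoOptimal pref σ) :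
    ∀ m, m ≤ n → ∃ l : List (Fin n), l.length = m ∧ l.Nodup ∧
      ∀ (j : ℕ) (hj : j < l.length), ∀ a : Fin n, a ∉ l.take j → a ≠ l[j] →
        pref l[j] (σ l[j]) (σ a) := by
  classical
  intro m
  induction m with
  | zero => exact fun _ => ⟨[], rfl, List.nodup_nil, fun j hj => by simp at hj⟩
  | succ m ih =>
    intro hm
    obtain ⟨l, hlen, hnd, hprop⟩ := ih (by omega)
    set S : Finset (Fin n) := Finset.univ \ l.toFinset with hS
    have hSne : S.Nonempty := by
      have hcard : l.toFinset.card = m := by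
        rw [List.toFinset_card_of_nodup hnd, hlen]
      rw [← Finset.card_pos, hS, Finset.card_sdiff_of_subset (Finset.subset_univ _)]
      simp [hcard]; omega
    obtain ⟨i, hiS, htop⟩ := exists_top_agent pref hpref σ hσ S hSne
    have hinotl : i ∉ l := by
      rw [hS, Finset.mem_sdiff] at hiS
      simpa using hiS.2
    refine ⟨l ++ [i], by simp [hlen], ?_, ?_⟩
    · simp [List.nodup_append, hnd, hinotl]; exact fun a ha h => hinotl (h ▸ ha)
    · intro j hj a ha hne
      simp only [List.length_append, List.length_singleton, hlen] at hj
      rcases Nat.lt_or_ge j m with hjm | hjm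
      · have hj' : j < l.length := by omega
        have h1 : (l ++ [i])[j] = l[j] := List.getElem_append_left hj'
        rw [h1] at hne ⊢
        have h2 : (l ++ [i]).take j = l.take j := by
          rw [List.take_append_of_le_length (by omega)]
        rw [h2] at ha
        exact hprop j hj' a ha hne
      · have hjm' : j = m := by omega
        have h1 : (l ++ [i])[j]'(by simp [hlen]; omega) = i := by
          rw [List.getElem_append_right (by omega)]
          simp [hlen, hjm']
        rw [h1] at hne ⊢
        have h2 : (l ++ [i]).take j = l := by
          rw [hjm', ← hlen, List.take_left]
        rw [h2] at ha
        have haS : a ∈ S := by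
          rw [hS, Finset.mem_sdiff]
          simpa using ha
        exact htop a haS hne

/-- Every Pareto-optimal allocation is a serial-dictatorship outcome for some
ordering of the agents: each agent in turn receives their most-preferred room
among the rooms not assigned to earlier agents. -/
theorem stmt_5 (n : ℕ) (pref : Fin n → Fin n → Fin n → Prop)
    (hpref : ∀ i, IsStrictTotalOrder (Fin n) (pref i))
    (σ : Fin n ≃ Fin n) (hσ : ParetoOptimal pref σ) :
    ∃ ord : Equiv.Perm (Fin n),
      ∀ j : Fin n, ∀ r : Fin n, (∀ k, k < j → σ (ord k) ≠ r) → r ≠ σ (ord j) →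
        pref (ord j) (σ (ord j)) r := by
  classical
  obtain ⟨l, hlen, hnd, hprop⟩ := build_list pref hpref σ hσ n le_rfl
  have hinj : Function.Injective (fun j : Fin n => l[(j : ℕ)]'(by rw [hlen]; exact j.2)) := by
    intro x y hxy
    have := List.nodup_iff_injective_get.mp hnd
      (show l.get ⟨x, by rw [hlen]; exact x.2⟩ = l.get ⟨y, by rw [hlen]; exact y.2⟩ by
        simpa using hxy)
    simpa [Fin.ext_iff] using this
  set ord : Equiv.Perm (Fin n) :=
    Equiv.ofBijective _ (Finite.injective_iff_bijective.mp hinj) with hord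
  have hordapp : ∀ j : Fin n, ord j = l[(j : ℕ)]'(by rw [hlen]; exact j.2) := fun j => rfl
  refine ⟨ord, ?_⟩
  intro j r hk hr
  set a : Fin n := σ.symm r with ha
  have hra : σ a = r := σ.apply_symm_apply r
  have hnotake : a ∉ l.take (j : ℕ) := by
    intro hmem
    obtain ⟨t, ht, hta⟩ := List.getElem_of_mem hmem
    have hlt' : t < (j : ℕ) := by
      have h := ht; rw [List.length_take] at h; omega
    have htn : t < n := lt_trans hlt' j.2
    apply hk ⟨t, htn⟩ (by simpa [Fin.lt_def] using hlt')
    have heq : ord ⟨t, htn⟩ = a := by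
      rw [hordapp]
      rw [List.getElem_take] at hta
      exact hta
    rw [heq, hra]
  have hne : a ≠ l[(j : ℕ)]'(by rw [hlen]; exact j.2) := by
    intro hc
    exact hr (by rw [← hra, hc]; exact congrArg σ (hordapp j).symm)
  have h := hprop j (by rw [hlen]; exact j.2) a hnotake hne
  rw [← hra]
  exact h
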